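/- arXiv:1504.01557 — 2 statements merged into one kernel-verified Lean document; each statement's English description precedes it below -/
import Mathlib

section
/- Every very weak subgame perfect equilibrium is a weak subgame perfect equilibrium: if a strategy profile in a turn-based multiplayer quantitative game played on a finite directed graph is resistant in every subgame to all profitable one-shot deviations, then it is resistant in every subgame to all profitable finitely deviating strategies. -/
open Classical

noncomputable section

/-- A multiplayer turn-based quantitative game on a directed graph:
`owner` assigns each vertex to a player, `E` is the edge relation (every
vertex has a successor), and `cost i` is player `i`'s cost function on
infinite sequences of vertices (to be minimized), valued in `ℝ ∪ {±∞}`. -/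
structure QGame (P V : Type) where
  owner : V → P
  E : V → V → Prop
  succ_exists : ∀ v, ∃ v', E v v'
  cost : P → (ℕ → V) → EReal

namespace QGame

variable {P V : Type}

/-- An infinite play of the game: consecutive vertices are joined by edges. -/
def IsPlay (G : QGame P V) (ρ : ℕ → V) : Prop := ∀ n, G.E (ρ n) (ρ (n + 1))

/-- Concatenation `hρ` of a finite history `h` with an infinite play `ρ`. -/
def prepend (h : List V) (ρ : ℕ → V) : ℕ → V := fun n =>
  if hn : n < h.length then h.get ⟨n, hn⟩ else ρ (n - h.length)

/-- The prefix of length `n` of a play, as a list. -/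
def playPrefix (ρ : ℕ → V) (n : ℕ) : List V := List.ofFn fun k : Fin n => ρ k

/-- `hv` is a history of the game initialized at `v0`: here `h` is the strict
past and `v` the current vertex; the sequence `h ++ [v]` starts at `v0` and
follows edges. -/
def IsHist (G : QGame P V) (v0 : V) (h : List V) (v : V) : Prop :=
  (h ++ [v]).head? = some v0 ∧ List.Chain' G.E (h ++ [v])

/-- A (turn-based) strategy profile: given the past history and the current
vertex, choose the next vertex.  An individual strategy of player `i` is of
the same type; only its values at vertices owned by `i` matter. -/
abbrev Strat (P V : Type) := List V → V → V

/-- A profile/strategy is valid if it always follows edges. -/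
def Valid (G : QGame P V) (σ : Strat P V) : Prop := ∀ h v, G.E v (σ h v)

/-- History/current-vertex pair produced after `n` steps of `σ` from `v`. -/
def outcomeAux (σ : Strat P V) (v : V) : ℕ → List V × V
  | 0 => ([], v)
  | n + 1 =>
      let p := outcomeAux σ v n
      (p.1 ++ [p.2], σ p.1 p.2)

/-- The outcome play of profile `σ` from initial vertex `v`. -/
def outcome (σ : Strat P V) (v : V) (n : ℕ) : V := (outcomeAux σ v n).2

/-- The profile where player `i` unilaterally deviates to strategy `τ`
from the profile `σ`. -/
def devProf (G : QGame P V) (σ τ : Strat P V) (i : P) : Strat P V :=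
  fun h v => if G.owner v = i then τ h v else σ h v

/-- The set of deviation steps of `τ` from `σ` (for player `i`, from `v`):
positions `n` along the outcome of the deviated profile where the current
vertex belongs to player `i` and `τ` disagrees with `σ`. -/
def devSteps (G : QGame P V) (σ τ : Strat P V) (i : P) (v : V) : Set ℕ :=
  {n | G.owner (outcome (G.devProf σ τ i) v n) = i ∧
       σ (outcomeAux (G.devProf σ τ i) v n).1 (outcome (G.devProf σ τ i) v n) ≠
       τ (outcomeAux (G.devProf σ τ i) v n).1 (outcome (G.devProf σ τ i) v n)}

/-- `τ` is finitely deviating from `σ`. -/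
def FinDev (G : QGame P V) (σ τ : Strat P V) (i : P) (v : V) : Prop :=
  (G.devSteps σ τ i v).Finite

/-- `τ` is one-shot deviating from `σ`: its unique deviation step is at the
initial vertex. -/
def OneShotDev (G : QGame P V) (σ τ : Strat P V) (i : P) (v : V) : Prop :=
  G.devSteps σ τ i v = {0}

/-- Nash equilibrium of the profile `σ` from `v`, with respect to a cost
assignment `c` (no player has a profitable unilateral deviation). -/
def IsNEwith (G : QGame P V) (c : P → (ℕ → V) → EReal) (σ : Strat P V) (v : V) : Prop :=
  ∀ i τ, G.Valid τ →
    c i (outcome σ v) ≤ c i (outcome (G.devProf σ τ i) v)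

/-- Weak Nash equilibrium: no profitable finitely deviating strategy. -/
def IsWeakNEwith (G : QGame P V) (c : P → (ℕ → V) → EReal) (σ : Strat P V) (v : V) : Prop :=
  ∀ i τ, G.Valid τ → G.FinDev σ τ i v →
    c i (outcome σ v) ≤ c i (outcome (G.devProf σ τ i) v)

/-- Very weak Nash equilibrium: no profitable one-shot deviating strategy. -/
def IsVeryWeakNEwith (G : QGame P V) (c : P → (ℕ → V) → EReal) (σ : Strat P V) (v : V) : Prop :=
  ∀ i τ, G.Valid τ → G.OneShotDev σ τ i v →
    c i (outcome σ v) ≤ c i (outcome (G.devProf σ τ i) v)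

/-- The strategy profile induced by `σ` in the subgame after history `h`. -/
def subStrat (σ : Strat P V) (h : List V) : Strat P V := fun g v => σ (h ++ g) v

/-- The cost functions of the subgame after history `h`. -/
def subCost (G : QGame P V) (h : List V) : P → (ℕ → V) → EReal :=
  fun i ρ => G.cost i (prepend h ρ)

/-- Subgame perfect equilibrium: Nash equilibrium in every subgame. -/
def IsSPE (G : QGame P V) (v0 : V) (σ : Strat P V) : Prop :=
  ∀ h v, G.IsHist v0 h v → G.IsNEwith (G.subCost h) (subStrat σ h) v

/-- Weak subgame perfect equilibrium: weak NE in every subgame. -/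
def IsWeakSPE (G : QGame P V) (v0 : V) (σ : Strat P V) : Prop :=
  ∀ h v, G.IsHist v0 h v → G.IsWeakNEwith (G.subCost h) (subStrat σ h) v

/-- Very weak subgame perfect equilibrium: very weak NE in every subgame. -/
def IsVeryWeakSPE (G : QGame P V) (v0 : V) (σ : Strat P V) : Prop :=
  ∀ h v, G.IsHist v0 h v → G.IsVeryWeakNEwith (G.subCost h) (subStrat σ h) v

/-- One elimination step: `ρ` (a potential outcome in the subgame after `h`)
is erased if some player `i` controlling a vertex `ρ n` along `hρ` has an
alternative edge to some `v' ≠ ρ (n+1)` such that every play `ρ'` in the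
current potential set after the extended history gives `i` a strictly
smaller cost than `hρ`. -/
def Eset (G : QGame P V) (Pr : List V → V → Set (ℕ → V)) (h : List V) :
    Set (ℕ → V) :=
  {ρ | ∃ n v', G.E (ρ n) v' ∧ v' ≠ ρ (n + 1) ∧
      ∀ ρ' ∈ Pr (h ++ playPrefix ρ (n + 1)) v',
        G.cost (G.owner (ρ n)) (prepend (h ++ playPrefix ρ (n + 1)) ρ') <
          G.cost (G.owner (ρ n)) (prepend h ρ)}

/-- The transfinite sequence `P_α(hv)` of sets of potential outcomes of weak
Nash equilibria in the subgame `(G|_h, v)`: all plays at stage `0`, removal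
of `E_α` at successors, intersections at limits. -/
def Pset (G : QGame P V) (α : Ordinal) : List V → V → Set (ℕ → V) :=
  Ordinal.limitRecOn (motive := fun _ => List V → V → Set (ℕ → V)) α
    (fun _h v => {ρ | G.IsPlay ρ ∧ ρ 0 = v})
    (fun _ Pr => fun h v => Pr h v \ G.Eset Pr h)
    (fun α _ Pr => fun h v => ⋂ (β : Ordinal) (hβ : β < α), Pr β hβ h v)

/-- A sequence of plays converges to `ρ` (in the product topology on `V^ω`
with `V` discrete) iff every finite prefix of `ρ` is eventually a prefix of
the members of the sequence. -/
def Converges (ρs : ℕ → ℕ → V) (ρ : ℕ → V) : Prop :=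
  ∀ m, ∃ N, ∀ n ≥ N, ∀ k ≤ m, ρs n k = ρ k

/-- Upper semicontinuity of a cost function on plays. -/
def USCcost (G : QGame P V) (c : (ℕ → V) → EReal) : Prop :=
  ∀ (ρs : ℕ → ℕ → V) (ρ : ℕ → V), (∀ n, G.IsPlay (ρs n)) → G.IsPlay ρ →
    Converges ρs ρ →
      Filter.limsup (fun n => c (ρs n)) Filter.atTop ≤ c ρ

/-- A strategy (profile) is finite-memory if it is computed by a Moore
machine: a finite set `M` of memory states, updated while reading the
history, determines the move. -/
def FinMem (σ : Strat P V) : Prop :=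
  ∃ (M : Type) (_ : Finite M) (m0 : M) (upd : M → V → M) (act : M → V → V),
    ∀ h v, σ h v = act (h.foldl upd m0) v

/-- Quantitative reachability cost: the least index at which `ρ` visits the
target set `T`, and `+∞` if `T` is never visited. -/
def reachCost (T : Set V) (ρ : ℕ → V) : EReal :=
  if h : ∃ n, ρ n ∈ T then ((Nat.find h : ℕ) : EReal) else ⊤

/-- `G` is a quantitative reachability game with target sets `T i`. -/
def IsReachGame (G : QGame P V) (T : P → Set V) : Prop :=
  ∀ i ρ, G.cost i ρ = reachCost (T i) ρ

/-- The set of players that have not visited their target set along the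
history `h`. -/
def Iset (T : P → Set V) (h : List V) : Set P := {i | ∀ u ∈ h, u ∉ T i}

end QGame


namespace QGame

variable {P V : Type}

lemma outcomeAux_fst (σ : Strat P V) (v : V) :
    ∀ n, (outcomeAux σ v n).1 = List.ofFn (fun k : Fin n => outcome σ v k)
  | 0 => by simp [outcomeAux]
  | n + 1 => by
      show (outcomeAux σ v n).1 ++ [(outcomeAux σ v n).2]
          = List.ofFn (fun k : Fin (n+1) => outcome σ v k)
      rw [List.ofFn_succ', List.concat_eq_append, outcomeAux_fst σ v n]
      simp [outcome]

lemma outcomeAux_len (σ : Strat P V) (v : V) (n : ℕ) :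
    (outcomeAux σ v n).1.length = n := by simp [outcomeAux_fst]

lemma outcomeAux_add (σ : Strat P V) (v : V) (n : ℕ) :
    ∀ k, outcomeAux σ v (n + k) =
      ((outcomeAux σ v n).1 ++
        (outcomeAux (subStrat σ (outcomeAux σ v n).1) (outcome σ v n) k).1,
       (outcomeAux (subStrat σ (outcomeAux σ v n).1) (outcome σ v n) k).2)
  | 0 => by simp [outcomeAux, outcome]
  | k + 1 => by
      have ih := outcomeAux_add σ v n k
      rw [show n + (k+1) = (n+k)+1 from rfl]
      show ((outcomeAux σ v (n+k)).1 ++ [(outcomeAux σ v (n+k)).2],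
            σ (outcomeAux σ v (n+k)).1 (outcomeAux σ v (n+k)).2) = _
      rw [ih]
      simp [outcomeAux, subStrat, List.append_assoc]

lemma outcomeAux_eq_of (σ₁ σ₂ : Strat P V) (v : V) :
    ∀ n, (∀ k < n, σ₁ (outcomeAux σ₁ v k).1 (outcomeAux σ₁ v k).2
           = σ₂ (outcomeAux σ₁ v k).1 (outcomeAux σ₁ v k).2) →
      outcomeAux σ₁ v n = outcomeAux σ₂ v n
  | 0, _ => rfl
  | n + 1, H => by
      have ih := outcomeAux_eq_of σ₁ σ₂ v n (fun k hk => H k (Nat.lt_succ_of_lt hk))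
      show ((outcomeAux σ₁ v n).1 ++ [(outcomeAux σ₁ v n).2],
            σ₁ (outcomeAux σ₁ v n).1 (outcomeAux σ₁ v n).2)
          = ((outcomeAux σ₂ v n).1 ++ [(outcomeAux σ₂ v n).2],
            σ₂ (outcomeAux σ₂ v n).1 (outcomeAux σ₂ v n).2)
      rw [H n (Nat.lt_succ_self n), ih]

lemma prepend_append (a b : List V) (ρ : ℕ → V) :
    prepend (a ++ b) ρ = prepend a (prepend b ρ) := by
  funext n
  simp only [prepend, List.length_append, List.get_eq_getElem]
  by_cases h1 : n < a.length
  · rw [dif_pos (by omega), dif_pos h1, List.getElem_append_left h1]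
  · rw [dif_neg h1]
    by_cases h2 : n < a.length + b.length
    · rw [dif_pos h2, dif_pos (by omega), List.getElem_append_right (by omega)]
    · rw [dif_neg h2, dif_neg (by omega)]
      congr 1
      omega

lemma outcomeAux_get (σ : Strat P V) (v : V) (n m : ℕ)
    (hm : m < (outcomeAux σ v n).1.length) :
    (outcomeAux σ v n).1.get ⟨m, hm⟩ = outcome σ v m := by
  simp only [List.get_eq_getElem, outcomeAux_fst, List.getElem_ofFn]

lemma outcome_eq_prepend (σ : Strat P V) (v : V) (n : ℕ) :
    outcome σ v = prepend (outcomeAux σ v n).1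
      (outcome (subStrat σ (outcomeAux σ v n).1) (outcome σ v n)) := by
  funext m
  rw [prepend]
  by_cases hm : m < (outcomeAux σ v n).1.length
  · rw [dif_pos hm, outcomeAux_get]
  · rw [dif_neg hm]
    rw [outcomeAux_len] at hm
    have hmn : n + (m - (outcomeAux σ v n).1.length) = m := by
      rw [outcomeAux_len]; omega
    conv_lhs => rw [← hmn]
    show (outcomeAux σ v (n + (m - (outcomeAux σ v n).1.length))).2 = _
    rw [outcomeAux_add]
    rfl

lemma valid_devProf (G : QGame P V) {σ' τ : Strat P V} (i : P)
    (h1 : G.Valid σ') (h2 : G.Valid τ) : G.Valid (G.devProf σ' τ i) := by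
  intro g u
  by_cases ho : G.owner u = i <;> simp [devProf, ho, h1 g u, h2 g u]

lemma isHist_outcome (G : QGame P V) {v0 v : V} {h : List V} {D : Strat P V}
    (hD : G.Valid D) (hh : G.IsHist v0 h v) :
    ∀ n, G.IsHist v0 (h ++ (outcomeAux D v n).1) ((outcomeAux D v n).2)
  | 0 => by simpa [outcomeAux] using hh
  | n + 1 => by
      obtain ⟨h1, h2⟩ := isHist_outcome G hD hh n
      show G.IsHist v0 (h ++ ((outcomeAux D v n).1 ++ [(outcomeAux D v n).2]))
        (D (outcomeAux D v n).1 (outcomeAux D v n).2)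
      constructor
      · rw [show h ++ ((outcomeAux D v n).1 ++ [(outcomeAux D v n).2]) ++
              [D (outcomeAux D v n).1 (outcomeAux D v n).2]
            = (h ++ (outcomeAux D v n).1 ++ [(outcomeAux D v n).2]) ++
              [D (outcomeAux D v n).1 (outcomeAux D v n).2] by simp [List.append_assoc]]
        rw [List.head?_append, h1]
        rfl
      · rw [show h ++ ((outcomeAux D v n).1 ++ [(outcomeAux D v n).2]) ++
              [D (outcomeAux D v n).1 (outcomeAux D v n).2]
            = (h ++ (outcomeAux D v n).1 ++ [(outcomeAux D v n).2]) ++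
              [D (outcomeAux D v n).1 (outcomeAux D v n).2] by simp [List.append_assoc]]
        show List.IsChain _ _
        rw [List.isChain_append]
        refine ⟨h2, List.isChain_singleton _, ?_⟩
        intro x hx y hy
        rw [List.getLast?_concat] at hx
        simp only [List.head?_cons, Option.mem_def, Option.some.injEq] at hx hy
        rw [← hx, ← hy]
        exact hD _ _

lemma subStrat_devProf (G : QGame P V) (σ' τ : Strat P V) (i : P) (pre : List V) :
    subStrat (G.devProf σ' τ i) pre = G.devProf (subStrat σ' pre) (subStrat τ pre) i := rfl

lemma subStrat_subStrat (σ : Strat P V) (h pre : List V) :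
    subStrat (subStrat σ h) pre = subStrat σ (h ++ pre) := by
  funext g u; simp [subStrat, List.append_assoc]

lemma subCost_prepend (G : QGame P V) (h pre : List V) (i : P) (ρ : ℕ → V) :
    G.subCost (h ++ pre) i ρ = G.subCost h i (prepend pre ρ) := by
  simp [subCost, prepend_append]

lemma devSteps_shift (G : QGame P V) (σ' τ : Strat P V) (i : P) (v : V) (n : ℕ) :
    G.devSteps (subStrat σ' (outcomeAux (G.devProf σ' τ i) v n).1)
        (subStrat τ (outcomeAux (G.devProf σ' τ i) v n).1) i
        (outcome (G.devProf σ' τ i) v n) =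
      {k | n + k ∈ G.devSteps σ' τ i v} := by
  ext k
  have hadd := outcomeAux_add (G.devProf σ' τ i) v n k
  have h2 : outcome (subStrat (G.devProf σ' τ i) (outcomeAux (G.devProf σ' τ i) v n).1)
      (outcome (G.devProf σ' τ i) v n) k = outcome (G.devProf σ' τ i) v (n + k) := by
    show _ = (outcomeAux (G.devProf σ' τ i) v (n+k)).2
    rw [hadd]
    rfl
  have h1 : (outcomeAux (G.devProf σ' τ i) v n).1 ++
      (outcomeAux (subStrat (G.devProf σ' τ i) (outcomeAux (G.devProf σ' τ i) v n).1)
        (outcome (G.devProf σ' τ i) v n) k).1 = (outcomeAux (G.devProf σ' τ i) v (n+k)).1 := by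
    rw [hadd]
  simp only [devSteps, Set.mem_setOf_eq]
  rw [← subStrat_devProf]
  rw [h2]
  show G.owner _ = i ∧
      σ' ((outcomeAux (G.devProf σ' τ i) v n).1 ++ _) _ ≠
      τ ((outcomeAux (G.devProf σ' τ i) v n).1 ++ _) _ ↔ _
  rw [h1]

lemma outcome_eq_of_devSteps_empty (G : QGame P V) (σ' τ : Strat P V) (i : P) (v : V)
    (h : G.devSteps σ' τ i v = ∅) :
    outcome (G.devProf σ' τ i) v = outcome σ' v := by
  funext n
  show (outcomeAux (G.devProf σ' τ i) v n).2 = (outcomeAux σ' v n).2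
  rw [outcomeAux_eq_of (G.devProf σ' τ i) σ' v n ?_]
  intro k _
  by_cases ho : G.owner (outcomeAux (G.devProf σ' τ i) v k).2 = i
  · have hmem : k ∉ G.devSteps σ' τ i v := by simp [h]
    simp only [devSteps, Set.mem_setOf_eq, not_and, not_not] at hmem
    have heq := hmem ho
    show (G.devProf σ' τ i) _ _ = σ' _ _
    simp only [devProf, ho, if_true]
    exact heq.symm
  · show (G.devProf σ' τ i) _ _ = σ' _ _
    simp [devProf, ho]

lemma key (G : QGame P V) (v0 : V) (σ : Strat P V) (hσ : G.Valid σ)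
    (hvw : G.IsVeryWeakSPE v0 σ) :
    ∀ (N : ℕ) (h : List V) (v : V), G.IsHist v0 h v →
      ∀ (i : P) (τ : Strat P V), G.Valid τ →
      ∀ (hf : (G.devSteps (subStrat σ h) τ i v).Finite), hf.toFinset.card ≤ N →
      G.subCost h i (outcome (subStrat σ h) v) ≤
        G.subCost h i (outcome (G.devProf (subStrat σ h) τ i) v) := by
  intro N
  induction N with
  | zero =>
      intro h v hist i τ hτ hf hcard
      have hempty : G.devSteps (subStrat σ h) τ i v = ∅ := by
        have := Finset.card_eq_zero.mp (Nat.le_zero.mp hcard)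
        rwa [Set.Finite.toFinset_eq_empty] at this
      rw [outcome_eq_of_devSteps_empty G _ τ i v hempty]
  | succ N ih =>
      intro h v hist i τ hτ hf hcard
      by_cases hne : G.devSteps (subStrat σ h) τ i v = ∅
      · rw [outcome_eq_of_devSteps_empty G _ τ i v hne]
      · set σ' := subStrat σ h with hσ'def
        have hσ'v : G.Valid σ' := fun g u => hσ (h ++ g) u
        have hfne : hf.toFinset.Nonempty := by
          rw [Set.Finite.toFinset_nonempty]
          exact Set.nonempty_iff_ne_empty.mpr hne
        set n := hf.toFinset.max' hfne with hndef
        have hnmem : n ∈ G.devSteps σ' τ i v := by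
          have := hf.toFinset.max'_mem hfne
          rwa [Set.Finite.mem_toFinset] at this
        have hnmax : ∀ m ∈ G.devSteps σ' τ i v, m ≤ n := fun m hm =>
          Finset.le_max' _ m (hf.mem_toFinset.mpr hm)
        set D := G.devProf σ' τ i with hDdef
        set pre := (outcomeAux D v n).1 with hpredef
        set vn := outcome D v n with hvndef
        set τ' : Strat P V := fun g u => if g.length < n then τ g u else σ' g u with hτ'def
        have hτ'valid : G.Valid τ' := by
          intro g u
          by_cases hg : g.length < n <;> simp [hτ'def, hg, hτ g u, hσ'v g u]
        set D' := G.devProf σ' τ' i with hD'def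
        have hauxDD' : ∀ k, k ≤ n → outcomeAux D' v k = outcomeAux D v k := by
          intro k hk
          apply outcomeAux_eq_of
          intro j hj
          have hlen : (outcomeAux D' v j).1.length = j := outcomeAux_len _ _ _
          have hjlt : (outcomeAux D' v j).1.length < n := by omega
          show G.devProf σ' τ' i _ _ = G.devProf σ' τ i _ _
          simp [devProf, hτ'def, hjlt]
        have hauxD'n : outcomeAux D' v n = (pre, vn) := hauxDD' n le_rfl
        have hsub : G.devSteps σ' τ' i v ⊆ ↑(hf.toFinset.erase n) := by
          intro k hk
          obtain ⟨hk1, hk2⟩ := hk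
          have hlenk : (outcomeAux D' v k).1.length = k := outcomeAux_len _ _ _
          by_cases hkn : k < n
          · have haux : outcomeAux D' v k = outcomeAux D v k := hauxDD' k hkn.le
            have hfst : (outcomeAux D' v k).1 = (outcomeAux D v k).1 := congrArg Prod.fst haux
            have hout : outcome D' v k = outcome D v k := congrArg Prod.snd haux
            have hkmem : k ∈ G.devSteps σ' τ i v := by
              constructor
              · rw [← hout]; exact hk1
              · rw [← hfst, ← hout]
                intro hcontra
                apply hk2
                rw [hcontra]
                show τ _ _ = τ' _ _
                simp [hτ'def, hlenk, hkn, outcomeAux_len, hD'def]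
            rw [Finset.mem_coe, Finset.mem_erase]
            exact ⟨by omega, hf.mem_toFinset.mpr hkmem⟩
          · exfalso
            apply hk2
            show σ' _ _ = τ' _ _
            simp [hτ'def, hlenk, hkn, outcomeAux_len]
        have hfin' : (G.devSteps σ' τ' i v).Finite :=
          Set.Finite.subset (hf.toFinset.erase n).finite_toSet hsub
        have hcard' : hfin'.toFinset.card ≤ N := by
          have h1 : hfin'.toFinset ⊆ hf.toFinset.erase n := by
            intro x hx
            exact hsub (hfin'.mem_toFinset.mp hx)
          have h2 := Finset.card_le_card h1
          have h3 : (hf.toFinset.erase n).card < hf.toFinset.card :=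
            Finset.card_erase_lt_of_mem (hf.mem_toFinset.mpr hnmem)
          omega
        have step1 := ih h v hist i τ' hτ'valid hfin' hcard'
        have hValidD : G.Valid D := valid_devProf G i hσ'v hτ
        have hist2 : G.IsHist v0 (h ++ pre) vn := isHist_outcome G hValidD hist n
        have hτpre : G.Valid (subStrat τ pre) := fun g u => hτ (pre ++ g) u
        have honeshot : G.OneShotDev (subStrat σ (h ++ pre)) (subStrat τ pre) i vn := by
          show G.devSteps _ _ i vn = {0}
          rw [← subStrat_subStrat]
          rw [hpredef, hvndef, hDdef]
          rw [devSteps_shift]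
          ext k
          simp only [Set.mem_setOf_eq, Set.mem_singleton_iff]
          constructor
          · intro hkmem
            have := hnmax _ hkmem
            omega
          · rintro rfl
            simpa using hnmem
        have hvw2 := hvw (h ++ pre) vn hist2 i (subStrat τ pre) hτpre honeshot
        have hfstD' : (outcomeAux D' v n).1 = pre := congrArg Prod.fst hauxD'n
        have hsndD' : outcome D' v n = vn := congrArg Prod.snd hauxD'n
        have hsubD' : subStrat D' pre = subStrat σ' pre := by
          funext g u
          have hlen : ¬ pre.length + g.length < n := by
            simp [hpredef, outcomeAux_len]
          show G.devProf σ' τ' i (pre ++ g) u = σ' (pre ++ g) u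
          simp [devProf, hτ'def, hlen]
        have houtD' : outcome D' v = prepend pre (outcome (subStrat σ' pre) vn) := by
          have h0 := outcome_eq_prepend D' v n
          rw [hfstD', hsndD', hsubD'] at h0
          exact h0
        have houtD : outcome D v = prepend pre (outcome (subStrat D pre) vn) :=
          outcome_eq_prepend D v n
        calc G.subCost h i (outcome σ' v)
            ≤ G.subCost h i (outcome D' v) := step1
          _ = G.subCost (h ++ pre) i (outcome (subStrat σ (h ++ pre)) vn) := by
              rw [houtD', ← subCost_prepend, subStrat_subStrat]
          _ ≤ G.subCost (h ++ pre) i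
                (outcome (G.devProf (subStrat σ (h ++ pre)) (subStrat τ pre) i) vn) := hvw2
          _ = G.subCost h i (outcome D v) := by
              rw [← subStrat_subStrat, ← subStrat_devProf, subCost_prepend, ← houtD]

end QGame

open QGame in
/-- Every very weak subgame perfect equilibrium is a weak
subgame perfect equilibrium: if a strategy profile of a turn-based
multiplayer quantitative game on a finite directed graph is, in every
subgame, resistant to all profitable one-shot deviations, then in every
subgame it is resistant to all profitable finitely deviating strategies. -/
theorem veryWeakSPE_is_weakSPE {P V : Type} [Finite P] [Finite V]
    (G : QGame P V) (v0 : V) (σ : Strat P V) (hσ : G.Valid σ)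
    (hvw : G.IsVeryWeakSPE v0 σ) : G.IsWeakSPE v0 σ := by
  intro h v hist i τ hτ hfd
  exact QGame.key G v0 σ hσ hvw hfd.toFinset.card h v hist i τ hτ hfd le_rfl
end
end

section
/- Suffix closure of potential outcomes: if a play ρ belongs to P_α(hv) and ρ = h_1 ρ_1 is any decomposition of ρ into a finite prefix h_1 and infinite suffix ρ_1 with first vertex v_1, then ρ_1 belongs to P_α(h h_1 v_1). -/
open Classical

noncomputable section

namespace QGame

variable {P V : Type}

lemma Pset_zero (G : QGame P V) :
    G.Pset 0 = fun _h v => {ρ | G.IsPlay ρ ∧ ρ 0 = v} :=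
  Ordinal.limitRecOn_zero _ _ _

lemma Pset_succ (G : QGame P V) (α : Ordinal) :
    G.Pset (Order.succ α) = fun h v => G.Pset α h v \ G.Eset (G.Pset α) h :=
  Ordinal.limitRecOn_succ _ _ _ _

lemma Pset_limit (G : QGame P V) (α : Ordinal) (hα : Order.IsSuccLimit α) :
    G.Pset α = fun h v => ⋂ (β : Ordinal) (_ : β < α), G.Pset β h v :=
  Ordinal.limitRecOn_limit _ _ _ _ hα

lemma playPrefix_append (ρ : ℕ → V) (n m : ℕ) :
    playPrefix ρ n ++ playPrefix (fun k => ρ (k + n)) m = playPrefix ρ (n + m) := by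
  apply List.ext_getElem
  · simp [playPrefix]
  · intro k h1 h2
    simp only [playPrefix, List.length_ofFn] at h2 ⊢
    rcases lt_or_ge k n with hk | hk
    · rw [List.getElem_append_left (by simpa [playPrefix] using hk)]
      simp [playPrefix]
    · rw [List.getElem_append_right (by simpa [playPrefix] using hk)]
      simp only [playPrefix, List.length_ofFn, List.getElem_ofFn]
      congr 1
      omega

lemma prepend_playPrefix (h : List V) (ρ : ℕ → V) (n : ℕ) :
    prepend (h ++ playPrefix ρ n) (fun k => ρ (k + n)) = prepend h ρ := by
  funext k
  simp only [prepend, List.length_append, playPrefix, List.length_ofFn]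
  rcases lt_or_ge k h.length with hk | hk
  · rw [dif_pos (by omega), dif_pos hk]
    simp [List.getElem_append_left hk]
  · rcases lt_or_ge k (h.length + n) with hk2 | hk2
    · rw [dif_pos (by omega), dif_neg (by omega)]
      have : (h ++ List.ofFn fun k : Fin n => ρ k).get ⟨k, by simp [List.length_append]; omega⟩
          = ρ (k - h.length) := by
        simp only [List.get_eq_getElem]
        rw [List.getElem_append_right (by omega)]
        simp
      simpa using this
    · rw [dif_neg (by omega), dif_neg (by omega)]
      congr 1
      omega

lemma playPrefix_shift_eval (ρ : ℕ → V) (n k : ℕ) :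
    (fun j => ρ (j + n)) k = ρ (k + n) := rfl

end QGame

open QGame in
/-- Suffix closure of the potential-outcome sets: if
`ρ ∈ P_α(hv)` and `ρ = h₁ρ₁` is any decomposition of `ρ` into the finite
prefix `h₁` of length `n` and the infinite suffix `ρ₁` starting at
`v₁ = ρ n`, then `ρ₁ ∈ P_α(h h₁ v₁)`. -/
theorem Pset_suffix_closed {P V : Type} [Finite P] [Finite V]
    (G : QGame P V) (α : Ordinal) (h : List V) (v : V) :
    ∀ ρ ∈ G.Pset α h v, ∀ n : ℕ,
      (fun k => ρ (k + n)) ∈ G.Pset α (h ++ playPrefix ρ n) (ρ n) := by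
  induction α using Ordinal.limitRecOn generalizing h v with
  | zero =>
    intro ρ hρ n
    rw [Pset_zero] at hρ ⊢
    obtain ⟨h1, h2⟩ := hρ
    refine ⟨fun k => ?_, by simp⟩
    have := h1 (k + n)
    simpa [Nat.add_right_comm k n 1] using this
  | add_one α ih =>
    intro ρ hρ n
    rw [Ordinal.add_one_eq_succ, Pset_succ] at hρ ⊢
    obtain ⟨h1, h2⟩ := hρ
    refine ⟨ih h v ρ h1 n, ?_⟩
    intro hE
    obtain ⟨m, v', hE1, hE2, hE3⟩ := hE
    apply h2
    refine ⟨n + m, v', ?_, ?_, ?_⟩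
    · simpa [Nat.add_comm m n] using hE1
    · simpa [show m + 1 + n = n + m + 1 by omega] using hE2
    · intro ρ' hρ'
      have hlist : (h ++ playPrefix ρ n) ++ playPrefix (fun k => ρ (k + n)) (m + 1)
          = h ++ playPrefix ρ (n + m + 1) := by
        rw [List.append_assoc, playPrefix_append, show n + (m + 1) = n + m + 1 by omega]
      have hρ'' : ρ' ∈ G.Pset α ((h ++ playPrefix ρ n) ++
          playPrefix (fun k => ρ (k + n)) (m + 1)) v' := by
        rw [hlist]; exact hρ'
      have := hE3 ρ' hρ''
      rw [hlist, prepend_playPrefix] at this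
      simpa [Nat.add_comm m n] using this
  | limit α hα ih =>
    intro ρ hρ n
    rw [Pset_limit G α hα] at hρ ⊢
    simp only [Set.mem_iInter] at hρ ⊢
    intro β hβ
    exact ih β hβ h v ρ (hρ β hβ) n
end
end
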